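/- Let (G,<) be a left-ordered group with a central, positive, cofinal element z, and let Ḡ = G/⟨z⟩. Define f_< : Ḡ² → ℤ by z^{f_<(a⟨z⟩,b⟨z⟩)} = (ā)(b̄)(ab̄)⁻¹ where x̄ denotes the minimal representative of x⟨z⟩ (the unique element of the coset with id ≤ x̄ < z). Then f_< = f_{c_<}, where c_< is the circular ordering on Ḡ induced by < and f_{c_<} is its associated 2-cocycle. -/

import Mathlib

open scoped Classical

noncomputable section

/-- A (left-invariant) circular ordering on a group `G`, as an orientation cocycle. -/
def IsCircularOrdering {G : Type*} [Group G] (c : G → G → G → ℤ) : Prop :=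
  (∀ a b d : G, c a b d = 0 ↔ a = b ∨ b = d ∨ a = d) ∧
  (∀ a b d : G, c a b d = 1 ∨ c a b d = 0 ∨ c a b d = -1) ∧
  (∀ a₁ a₂ a₃ a₄ : G, c a₂ a₃ a₄ - c a₁ a₃ a₄ + c a₁ a₂ a₄ - c a₁ a₂ a₃ = 0) ∧
  (∀ g a₁ a₂ a₃ : G, c (g * a₁) (g * a₂) (g * a₃) = c a₁ a₂ a₃)

/-- The normalized 2-cocycle `f_c` associated to a circular ordering `c`:
`f_c a b = 0` if `a = 1` or `b = 1` or `c 1 a (a*b) = 1`, and `1` otherwise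
(i.e. when `a*b = 1` with `a ≠ 1`, or `c 1 (a*b) a = 1`). -/
def fc {G : Type*} [Group G] (c : G → G → G → ℤ) (a b : G) : ℤ :=
  if a = 1 ∨ b = 1 ∨ c 1 a (a * b) = 1 then 0 else 1

/-- `f_< = f_{c_<}` : the cocycle measuring the failure of the minimal-representative section
to be a homomorphism equals the cocycle associated to the induced circular ordering. -/
theorem stmt4 {G : Type*} [Group G] (lt : G → G → Prop)
    (hsto : IsStrictTotalOrder G lt)
    (hinv : ∀ f g h : G, lt g h → lt (f * g) (f * h))
    (z : G) (hzc : ∀ g : G, z * g = g * z) (hzpos : lt 1 z)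
    (hcof : ∀ g : G, ∃ k : ℤ, lt (z ^ (-k)) g ∧ lt g (z ^ k))
    [hnrm : (Subgroup.zpowers z).Normal]
    (m : G → G)
    (hm : ∀ g : G, (∃ k : ℤ, m g = g * z ^ k) ∧ ¬lt (m g) 1 ∧ lt (m g) z)
    (hmc : ∀ g g' : G, (∃ k : ℤ, g' = g * z ^ k) → m g = m g')
    (cbar : G ⧸ Subgroup.zpowers z → G ⧸ Subgroup.zpowers z → G ⧸ Subgroup.zpowers z → ℤ)
    (hcbar : IsCircularOrdering cbar)
    (hcbar' : ∀ g₁ g₂ g₃ : G,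
        (g₁ : G ⧸ Subgroup.zpowers z) ≠ (g₂ : G ⧸ Subgroup.zpowers z) →
        (g₂ : G ⧸ Subgroup.zpowers z) ≠ (g₃ : G ⧸ Subgroup.zpowers z) →
        (g₁ : G ⧸ Subgroup.zpowers z) ≠ (g₃ : G ⧸ Subgroup.zpowers z) →
        cbar (g₁ : G ⧸ Subgroup.zpowers z) (g₂ : G ⧸ Subgroup.zpowers z)
            (g₃ : G ⧸ Subgroup.zpowers z) =
          if (lt (m g₁) (m g₂) ∧ lt (m g₂) (m g₃)) ∨ (lt (m g₂) (m g₃) ∧ lt (m g₃) (m g₁)) ∨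
              (lt (m g₃) (m g₁) ∧ lt (m g₁) (m g₂)) then 1 else -1) :
    ∀ a b : G,
      m a * m b * (m (a * b))⁻¹ =
        z ^ (fc cbar (a : G ⧸ Subgroup.zpowers z) (b : G ⧸ Subgroup.zpowers z)) := by
  -- basic order facts
  have htri : ∀ x y : G, lt x y ∨ x = y ∨ lt y x := fun x y =>
    if h1 : lt x y then Or.inl h1 else if h2 : lt y x then Or.inr (Or.inr h2) else Or.inr (Or.inl (hsto.trichotomous x y h1 h2))
  have htrans : ∀ x y w : G, lt x y → lt y w → lt x w := fun x y w h1 h2 =>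
    hsto.trans x y w h1 h2
  have hirr : ∀ x : G, ¬lt x x := fun x => hsto.irrefl x
  have hasym : ∀ x y : G, lt x y → ¬lt y x := fun x y h1 h2 => hirr x (htrans x y x h1 h2)
  have hcanc : ∀ g x y : G, lt (g * x) (g * y) → lt x y := by
    intro g x y h
    rcases htri x y with h1 | rfl | h1
    · exact h1
    · exact absurd h (hirr _)
    · exact absurd (hinv g y x h1) (hasym _ _ h)
  have hcom : ∀ (k : ℤ) (g : G), z ^ k * g = g * z ^ k := by
    intro k g
    have : Commute z g := hzc g
    exact (this.zpow_left k).eq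
  have hposn : ∀ n : ℕ, lt 1 (z ^ (n + 1)) := by
    intro n
    induction n with
    | zero => simpa using hzpos
    | succ n ih =>
      have h1 : lt (z ^ (n + 1) * 1) (z ^ (n + 1) * z) := hinv _ _ _ hzpos
      rw [mul_one] at h1
      have h2 : lt 1 (z ^ (n + 1) * z) := htrans _ _ _ ih h1
      rwa [← pow_succ] at h2
  have hposZ : ∀ k : ℤ, 0 < k → lt 1 (z ^ k) := by
    intro k hk
    lift k to ℕ using hk.le
    rw [zpow_natCast]
    obtain ⟨n, rfl⟩ : ∃ n : ℕ, k = n + 1 := ⟨k - 1, by omega⟩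
    exact hposn n
  have hzlt : ∀ j k : ℤ, j < k → lt (z ^ j) (z ^ k) := by
    intro j k h
    have h1 : lt (z ^ j * 1) (z ^ j * z ^ (k - j)) := hinv _ _ _ (hposZ _ (by omega))
    rwa [mul_one, ← zpow_add, show j + (k - j) = k by omega] at h1
  have hzlt' : ∀ j k : ℤ, lt (z ^ j) (z ^ k) → j < k := by
    intro j k h
    rcases lt_trichotomy j k with h1 | rfl | h1
    · exact h1
    · exact absurd h (hirr _)
    · exact absurd (hzlt _ _ h1) (hasym _ _ h)
  have hm1 : m 1 = 1 := by
    obtain ⟨k, hk⟩ := (hm 1).1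
    rw [one_mul] at hk
    have h1 : ¬lt (z ^ k) 1 := hk ▸ (hm 1).2.1
    have h2 : lt (z ^ k) z := hk ▸ (hm 1).2.2
    have hk0 : k = 0 := by
      have ha : ¬k < 0 := fun h => h1 (by simpa using hzlt k 0 h)
      have hb : k < 1 := hzlt' k 1 (by rwa [zpow_one])
      omega
    rw [hk, hk0, zpow_zero]
  have hmne : ∀ g : G, (g : G ⧸ Subgroup.zpowers z) ≠ 1 → lt 1 (m g) := by
    intro g hg
    have hne : m g ≠ 1 := by
      obtain ⟨k, hk⟩ := (hm g).1
      intro h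
      apply hg
      rw [QuotientGroup.eq_one_iff]
      have h2 : g * z ^ k = 1 := by rw [← hk, h]
      refine Subgroup.mem_zpowers_iff.2 ⟨-k, ?_⟩
      rw [zpow_neg]
      exact (eq_inv_of_mul_eq_one_left h2).symm
    rcases htri 1 (m g) with h1 | h1 | h1
    · exact h1
    · exact absurd h1.symm hne
    · exact absurd h1 (hm g).2.1
  have hmeq : ∀ g g' : G,
      (g : G ⧸ Subgroup.zpowers z) = (g' : G ⧸ Subgroup.zpowers z) → m g = m g' := by
    intro g g' h
    apply hmc
    obtain ⟨k, hk⟩ := Subgroup.mem_zpowers_iff.1 (QuotientGroup.eq.1 h)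
    exact ⟨k, by rw [hk, mul_inv_cancel_left]⟩
  intro a b
  by_cases hA : (a : G ⧸ Subgroup.zpowers z) = 1
  · have hma : m 1 = m a := hmeq 1 a (by rw [QuotientGroup.mk_one, hA])
    have hmab : m b = m (a * b) := hmeq b (a * b)
      (by rw [QuotientGroup.mk_mul, hA, one_mul])
    have hfc : fc cbar (a : G ⧸ Subgroup.zpowers z) (b : G ⧸ Subgroup.zpowers z) = 0 := by
      simp only [fc]; rw [if_pos (Or.inl hA)]
    rw [hfc, zpow_zero, ← hmab, ← hma, hm1, one_mul, mul_inv_cancel]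
  by_cases hB : (b : G ⧸ Subgroup.zpowers z) = 1
  · have hmb : m 1 = m b := hmeq 1 b (by rw [QuotientGroup.mk_one, hB])
    have hmab : m a = m (a * b) := hmeq a (a * b)
      (by rw [QuotientGroup.mk_mul, hB, mul_one])
    have hfc : fc cbar (a : G ⧸ Subgroup.zpowers z) (b : G ⧸ Subgroup.zpowers z) = 0 := by
      simp only [fc]; rw [if_pos (Or.inr (Or.inl hB))]
    rw [hfc, zpow_zero, ← hmab, ← hmb, hm1, mul_one, mul_inv_cancel]
  -- the exponent e and its bounds
  obtain ⟨p, hp⟩ := (hm a).1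
  obtain ⟨q, hq⟩ := (hm b).1
  obtain ⟨r, hr⟩ := (hm (a * b)).1
  have key : m a * m b = m (a * b) * z ^ (p + q - r) := by
    rw [hp, hq, hr]
    have h1 : a * z ^ p * (b * z ^ q) = a * b * z ^ (p + q) := by
      rw [mul_assoc a (z ^ p), ← mul_assoc (z ^ p) b, hcom p b, mul_assoc b, ← zpow_add,
        ← mul_assoc]
    rw [h1]
    conv_rhs => rw [mul_assoc, ← zpow_add, show r + (p + q - r) = p + q by omega]
  have key2 : m a * m b * (m (a * b))⁻¹ = z ^ (p + q - r) := by
    rw [key, ← hcom (p + q - r) (m (a * b)), mul_assoc, mul_inv_cancel, mul_one]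
  set e : ℤ := p + q - r with hedef
  have h1a : lt 1 (m a) := hmne a hA
  have h1b : lt 1 (m b) := hmne b hB
  have hlow : lt 1 (m a * m b) := by
    have h2 : lt (m a * 1) (m a * m b) := hinv _ _ _ h1b
    rw [mul_one] at h2
    exact htrans _ _ _ h1a h2
  have hup : lt (m a * m b) (z ^ (2 : ℤ)) := by
    have h1 : lt (m a * m b) (m a * z) := hinv _ _ _ (hm b).2.2
    have h2 : lt (z * m a) (z * z) := hinv _ _ _ (hm a).2.2
    have h3 : m a * z = z * m a := (hzc (m a)).symm
    have h4 : z ^ (2 : ℤ) = z * z := by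
      rw [show (2 : ℤ) = 1 + 1 by norm_num, zpow_add, zpow_one]
    rw [h4]
    exact htrans _ _ _ (h3 ▸ h1) h2
  have he2 : e < 2 := by
    have hlt : lt (z ^ e) (z ^ (2 : ℤ)) := by
      rcases htri (m (a * b)) 1 with h1 | h1 | h1
      · exact absurd h1 (hm (a * b)).2.1
      · have : m a * m b = z ^ e := by rw [key, h1, one_mul]
        rw [← this]; exact hup
      · have h2 : lt (z ^ e * 1) (z ^ e * m (a * b)) := hinv _ _ _ h1
        rw [mul_one] at h2
        have h3 : z ^ e * m (a * b) = m a * m b := by rw [key, hcom]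
        exact htrans _ _ _ (h3 ▸ h2) hup
    exact hzlt' _ _ hlt
  have he0 : 0 ≤ e := by
    by_contra h
    push_neg at h
    have h1 : lt (m a * m b) (z ^ (e + 1)) := by
      have h2 : lt (z ^ e * m (a * b)) (z ^ e * z) := hinv _ _ _ (hm (a * b)).2.2
      rw [show z ^ e * z = z ^ (e + 1) by rw [zpow_add, zpow_one]] at h2
      have h3 : z ^ e * m (a * b) = m a * m b := by rw [key, hcom]
      rwa [h3] at h2
    have h4 : e + 1 ≤ 0 := by omega
    rcases eq_or_lt_of_le h4 with h5 | h5
    · rw [h5, zpow_zero] at h1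
      exact hasym _ _ hlow h1
    · have h6 : lt (z ^ (e + 1)) 1 := by simpa using hzlt (e + 1) 0 h5
      exact hasym _ _ hlow (htrans _ _ _ h1 h6)
  by_cases hC : (a : G ⧸ Subgroup.zpowers z) * (b : G ⧸ Subgroup.zpowers z) = 1
  · -- a*b lies in ⟨z⟩ : fc = 1 and e = 1
    have hmab : m (a * b) = 1 := by
      have := hmeq 1 (a * b) (by rw [QuotientGroup.mk_one, QuotientGroup.mk_mul, hC])
      rw [← this, hm1]
    have hz0 : cbar 1 (a : G ⧸ Subgroup.zpowers z) 1 = 0 :=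
      (hcbar.1 1 _ 1).2 (Or.inr (Or.inr rfl))
    have hfc : fc cbar (a : G ⧸ Subgroup.zpowers z) (b : G ⧸ Subgroup.zpowers z) = 1 := by
      simp only [fc]
      rw [if_neg]
      push_neg
      exact ⟨hA, hB, by rw [hC, hz0]; norm_num⟩
    have hE : e = 1 := by
      have hne0 : e ≠ 0 := by
        intro h
        have : m a * m b = 1 := by rw [key, hmab, one_mul, h, zpow_zero]
        rw [this] at hlow
        exact hirr _ hlow
      omega
    rw [hfc, key2, hE]
  · -- main case: 1, a, a*b in distinct cosets
    have h12 : ((1 : G) : G ⧸ Subgroup.zpowers z) ≠ (a : G ⧸ Subgroup.zpowers z) := by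
      rw [QuotientGroup.mk_one]; exact fun h => hA h.symm
    have h23 : (a : G ⧸ Subgroup.zpowers z) ≠ ((a * b : G) : G ⧸ Subgroup.zpowers z) := by
      rw [QuotientGroup.mk_mul]
      intro h
      exact hB (left_eq_mul.1 h)
    have h13 : ((1 : G) : G ⧸ Subgroup.zpowers z) ≠ ((a * b : G) : G ⧸ Subgroup.zpowers z) := by
      rw [QuotientGroup.mk_one, QuotientGroup.mk_mul]
      exact fun h => hC h.symm
    have hval := hcbar' 1 a (a * b) h12 h23 h13
    rw [QuotientGroup.mk_one, QuotientGroup.mk_mul, hm1] at hval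
    have hnab : ¬lt (m (a * b)) 1 := (hm (a * b)).2.1
    rcases (by omega : e = 0 ∨ e = 1) with hE | hE
    · -- e = 0 : m(ab) = m a * m b, so m a < m(ab), cbar = 1, fc = 0
      have hk0 : m a * m b = m (a * b) := by rw [key, hE, zpow_zero, mul_one]
      have hlt1 : lt (m a) (m (a * b)) := by
        rw [← hk0]
        have h2 : lt (m a * 1) (m a * m b) := hinv _ _ _ h1b
        rwa [mul_one] at h2
      have hcv : cbar 1 ((a : G ⧸ Subgroup.zpowers z))
          ((a : G ⧸ Subgroup.zpowers z) * (b : G ⧸ Subgroup.zpowers z)) = 1 := by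
        rw [hval, if_pos (Or.inl ⟨h1a, hlt1⟩)]
      have hfc : fc cbar (a : G ⧸ Subgroup.zpowers z) (b : G ⧸ Subgroup.zpowers z) = 0 := by
        simp only [fc]
        rw [if_pos (Or.inr (Or.inr hcv))]
      rw [hfc, key2, hE]
    · -- e = 1 : m(ab) < m a, cbar = -1, fc = 1
      have hk1 : m a * m b = m (a * b) * z := by
        rw [key, hE, zpow_one]
      have hlt2 : lt (m (a * b)) (m a) := by
        have h1 : lt (m a * m b) (m a * z) := hinv _ _ _ (hm b).2.2
        rw [hk1] at h1
        rw [← hzc (m (a * b)), ← hzc (m a)] at h1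
        exact hcanc z _ _ h1
      have hcv : cbar 1 ((a : G ⧸ Subgroup.zpowers z))
          ((a : G ⧸ Subgroup.zpowers z) * (b : G ⧸ Subgroup.zpowers z)) = -1 := by
        rw [hval, if_neg]
        push_neg
        exact ⟨fun _ => hasym _ _ hlt2, fun h => absurd h (hasym _ _ hlt2),
          fun h => absurd h hnab⟩
      have hfc : fc cbar (a : G ⧸ Subgroup.zpowers z) (b : G ⧸ Subgroup.zpowers z) = 1 := by
        simp only [fc]
        rw [if_neg]
        push_neg
        exact ⟨hA, hB, by rw [hcv]; norm_num⟩
      rw [hfc, key2, hE]
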